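/- Let A₁ = M(2n, R₁) and A₂ = M(2n, R₂) for rings R₁, R₂ linked by an anti-isomorphism φ extended entrywise, and let A = A₁ × A₂ with the φ-flip transpose involution a* = (φ⁻¹(a₂)ᵗ, φ(a₁)ᵗ). Then the map g₀ ↦ (g₀, J(φ(g₀)⁻¹)ᵗ J⁻¹) is a group isomorphism from GL(2, A₁) onto SL_*(2, A), where entries of 2×2 matrices over A are interpreted componentwise. -/
import Mathlib


open Matrix

variable {R : Type*} [CommRing R] {n : ℕ}

/-- M = M(2n, R). -/
abbrev MatR (R : Type*) [CommRing R] (n : ℕ) := Matrix (Fin (2 * n)) (Fin (2 * n)) R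

/-- A = M × M with (taking R₁ = R₂ = R and φ = id) the flip transpose
involution (a₁, a₂)* = (a₂ᵗ, a₁ᵗ). -/
def invA (a : MatR R n × MatR R n) : MatR R n × MatR R n := (a.2ᵀ, a.1ᵀ)

/-- The induced involution on 2×2 matrices over A: g* = ((g j i)*)_{i j}. -/
def invA2 (g : Matrix (Fin 2) (Fin 2) (MatR R n × MatR R n)) :
    Matrix (Fin 2) (Fin 2) (MatR R n × MatR R n) :=
  Matrix.of fun i j => invA (g j i)

/-- J = [[0,1],[-1,0]] over A. -/
def JA (R : Type*) [CommRing R] (n : ℕ) :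
    Matrix (Fin 2) (Fin 2) (MatR R n × MatR R n) := !![0, 1; -1, 0]

/-- det_* on M(2, A). -/
def detStarA (g : Matrix (Fin 2) (Fin 2) (MatR R n × MatR R n)) :
    MatR R n × MatR R n :=
  g 0 0 * invA (g 1 1) - g 0 1 * invA (g 1 0)

/-- g ∈ SL_*(2, A): g* J g = J and det_* g = 1. -/
def SLstarA (g : Matrix (Fin 2) (Fin 2) (MatR R n × MatR R n)) : Prop :=
  invA2 g * JA R n * g = JA R n ∧ detStarA g = 1

/-- The transpose-at-both-levels map on 2×2 matrices over M (the "ᵗ" of the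
formula g₀ ↦ (g₀, J(g₀⁻¹)ᵗJ⁻¹), interpreted componentwise). -/
def sigT (g : Matrix (Fin 2) (Fin 2) (MatR R n)) :
    Matrix (Fin 2) (Fin 2) (MatR R n) :=
  Matrix.of fun i j => (g j i)ᵀ

/-- The map g₀ ↦ (g₀, J(g₀⁻¹)ᵗJ⁻¹) from 2×2 matrices over A₁ = M to 2×2
matrices over A = A₁ × A₂, entries interpreted componentwise. -/
noncomputable def Phi (g₀ : Matrix (Fin 2) (Fin 2) (MatR R n)) :
    Matrix (Fin 2) (Fin 2) (MatR R n × MatR R n) :=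
  Matrix.of fun i j =>
    (g₀ i j,
      ((!![0, 1; -1, 0] : Matrix (Fin 2) (Fin 2) (MatR R n)) *
        sigT (Ring.inverse g₀) *
        (!![0, -1; 1, 0] : Matrix (Fin 2) (Fin 2) (MatR R n))) i j)

/-! ### Auxiliary machinery -/

/-- J over M. -/
def Jm (R : Type*) [CommRing R] (n : ℕ) : Matrix (Fin 2) (Fin 2) (MatR R n) :=
  !![0, 1; -1, 0]

/-- J⁻¹ over M. -/
def Jm' (R : Type*) [CommRing R] (n : ℕ) : Matrix (Fin 2) (Fin 2) (MatR R n) :=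
  !![0, -1; 1, 0]

lemma Jm_mul_Jm' : Jm R n * Jm' R n = 1 := by
  rw [Jm, Jm', Matrix.mul_fin_two, Matrix.one_fin_two]
  norm_num

lemma Jm'_mul_Jm : Jm' R n * Jm R n = 1 := by
  rw [Jm, Jm', Matrix.mul_fin_two, Matrix.one_fin_two]
  norm_num

lemma Jm_mul_Jm : Jm R n * Jm R n = -1 := by
  rw [Jm, Matrix.mul_fin_two, Matrix.one_fin_two]
  norm_num

lemma neg_Jm : -(Jm R n) = Jm' R n := by
  rw [Jm, Jm']
  norm_num

lemma neg_Jm' : -(Jm' R n) = Jm R n := by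
  rw [Jm, Jm']
  norm_num

lemma sigT_mul (a b : Matrix (Fin 2) (Fin 2) (MatR R n)) :
    sigT (a * b) = sigT b * sigT a := by
  ext i j
  simp [sigT, Matrix.mul_apply, Matrix.transpose_sum, Matrix.transpose_mul]

lemma sigT_one : sigT (1 : Matrix (Fin 2) (Fin 2) (MatR R n)) = 1 := by
  ext i j
  by_cases h : i = j <;> simp [sigT, Matrix.one_apply, h, eq_comm]

lemma sigT_sigT (a : Matrix (Fin 2) (Fin 2) (MatR R n)) : sigT (sigT a) = a := by
  ext i j
  simp [sigT]

lemma sigT_Jm : sigT (Jm R n) = Jm' R n := by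
  ext i j : 1
  fin_cases i <;> fin_cases j <;>
    simp [sigT, Jm, Jm', Matrix.transpose_one, Matrix.transpose_neg]

lemma sigT_Jm' : sigT (Jm' R n) = Jm R n := by
  ext i j : 1
  fin_cases i <;> fin_cases j <;>
    simp [sigT, Jm, Jm', Matrix.transpose_one, Matrix.transpose_neg]

/-- The map X ↦ J Xᵗ J⁻¹ (at the 2×2-over-M level). -/
def Psi (g : Matrix (Fin 2) (Fin 2) (MatR R n)) : Matrix (Fin 2) (Fin 2) (MatR R n) :=
  Jm R n * sigT g * Jm' R n

lemma Psi_mul (a b : Matrix (Fin 2) (Fin 2) (MatR R n)) :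
    Psi (a * b) = Psi b * Psi a := by
  simp only [Psi, sigT_mul, Matrix.mul_assoc]
  rw [← Matrix.mul_assoc (Jm' R n) (Jm R n), Jm'_mul_Jm, Matrix.one_mul]

lemma Psi_one : Psi (1 : Matrix (Fin 2) (Fin 2) (MatR R n)) = 1 := by
  rw [Psi, sigT_one, Matrix.mul_one, Jm_mul_Jm']

lemma sigT_Psi (a : Matrix (Fin 2) (Fin 2) (MatR R n)) :
    sigT (Psi a) = Jm R n * a * Jm' R n := by
  rw [Psi, sigT_mul, sigT_mul, sigT_Jm, sigT_Jm', sigT_sigT, Matrix.mul_assoc]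

lemma Jm'_mul_Jm' : Jm' R n * Jm' R n = -1 := by
  rw [Jm', Matrix.mul_fin_two, Matrix.one_fin_two]
  norm_num

lemma Psi_Psi (a : Matrix (Fin 2) (Fin 2) (MatR R n)) : Psi (Psi a) = a := by
  rw [Psi, sigT_Psi]
  simp only [Matrix.mul_assoc]
  rw [Jm'_mul_Jm', Matrix.mul_neg, Matrix.mul_one, Matrix.mul_neg, Matrix.mul_neg,
    ← Matrix.mul_assoc, Jm_mul_Jm, Matrix.neg_mul, Matrix.one_mul, neg_neg]

lemma Psi_entries (X : Matrix (Fin 2) (Fin 2) (MatR R n)) :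
    Psi X = !![(X 1 1)ᵀ, -(X 0 1)ᵀ; -(X 1 0)ᵀ, (X 0 0)ᵀ] := by
  ext i j : 2
  fin_cases i <;> fin_cases j <;>
    simp [Psi, Jm, Jm', sigT, Matrix.mul_apply, Fin.sum_univ_two, Matrix.vecHead,
      Matrix.vecTail]

/-- First-component projection, as a ring hom. -/
def fstM : Matrix (Fin 2) (Fin 2) (MatR R n × MatR R n) →+* Matrix (Fin 2) (Fin 2) (MatR R n) :=
  (RingHom.fst _ _).mapMatrix

/-- Second-component projection, as a ring hom. -/
def sndM : Matrix (Fin 2) (Fin 2) (MatR R n × MatR R n) →+* Matrix (Fin 2) (Fin 2) (MatR R n) :=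
  (RingHom.snd _ _).mapMatrix

@[simp] lemma fstM_apply (g : Matrix (Fin 2) (Fin 2) (MatR R n × MatR R n)) (i j : Fin 2) :
    fstM g i j = (g i j).1 := rfl

@[simp] lemma sndM_apply (g : Matrix (Fin 2) (Fin 2) (MatR R n × MatR R n)) (i j : Fin 2) :
    sndM g i j = (g i j).2 := rfl

lemma pair_ext {g h : Matrix (Fin 2) (Fin 2) (MatR R n × MatR R n)}
    (h1 : fstM g = fstM h) (h2 : sndM g = sndM h) : g = h := by
  ext i j : 1
  exact Prod.ext_iff.mpr ⟨congrFun (congrFun h1 i) j, congrFun (congrFun h2 i) j⟩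

lemma fstM_Phi (g₀ : Matrix (Fin 2) (Fin 2) (MatR R n)) : fstM (Phi g₀) = g₀ := rfl

lemma sndM_Phi (g₀ : Matrix (Fin 2) (Fin 2) (MatR R n)) :
    sndM (Phi g₀) = Psi (Ring.inverse g₀) := rfl

lemma fstM_JA : fstM (JA R n) = Jm R n := by
  ext i j
  fin_cases i <;> fin_cases j <;> simp [JA, Jm]

lemma sndM_JA : sndM (JA R n) = Jm R n := by
  ext i j
  fin_cases i <;> fin_cases j <;> simp [JA, Jm]

lemma fstM_invA2 (g : Matrix (Fin 2) (Fin 2) (MatR R n × MatR R n)) :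
    fstM (invA2 g) = sigT (sndM g) := rfl

lemma sndM_invA2 (g : Matrix (Fin 2) (Fin 2) (MatR R n × MatR R n)) :
    sndM (invA2 g) = sigT (fstM g) := rfl

lemma detStarA_eq (g : Matrix (Fin 2) (Fin 2) (MatR R n × MatR R n)) :
    detStarA g =
      (fstM g 0 0 * (sndM g 1 1)ᵀ - fstM g 0 1 * (sndM g 1 0)ᵀ,
        sndM g 0 0 * (fstM g 1 1)ᵀ - sndM g 0 1 * (fstM g 1 0)ᵀ) := rfl

lemma inverse_mul_rev {g₀ g₁ : Matrix (Fin 2) (Fin 2) (MatR R n)}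
    (h₀ : IsUnit g₀) (h₁ : IsUnit g₁) :
    Ring.inverse (g₀ * g₁) = Ring.inverse g₁ * Ring.inverse g₀ := by
  have hu : IsUnit (g₀ * g₁) := h₀.mul h₁
  have h2 : g₀ * (g₁ * (Ring.inverse g₁ * Ring.inverse g₀)) = 1 := by
    rw [← Matrix.mul_assoc g₁, Ring.mul_inverse_cancel _ h₁, Matrix.one_mul,
      Ring.mul_inverse_cancel _ h₀]
  calc Ring.inverse (g₀ * g₁)
      = Ring.inverse (g₀ * g₁) * (g₀ * (g₁ * (Ring.inverse g₁ * Ring.inverse g₀))) := by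
        rw [h2, Matrix.mul_one]
    _ = (Ring.inverse (g₀ * g₁) * (g₀ * g₁)) * (Ring.inverse g₁ * Ring.inverse g₀) := by
        simp only [Matrix.mul_assoc]
    _ = Ring.inverse g₁ * Ring.inverse g₀ := by
        rw [Ring.inverse_mul_cancel _ hu, Matrix.one_mul]

/-- Over a commutative base ring, one-sided inverses of nested square matrices
commute. -/
lemma nested_mul_eq_one_comm {a b : Matrix (Fin 2) (Fin 2) (MatR R n)}
    (h : a * b = 1) : b * a = 1 := by
  let e := Matrix.compRingEquiv (Fin 2) (Fin (2 * n)) R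
  have h' : e a * e b = 1 := by rw [← _root_.map_mul, h, _root_.map_one]
  have h'' : e b * e a = 1 := mul_eq_one_comm.mp h'
  have := congrArg e.symm (by rw [_root_.map_mul, h''] : e (b * a) = 1)
  simpa using this

/-- g₀ ↦ (g₀, J(φ(g₀)⁻¹)ᵗJ⁻¹) is a group isomorphism from
GL(2, A₁) onto SL_*(2, A) (here R₁ = R₂ = R commutative and φ = id). -/
theorem stmt16 (R : Type*) [CommRing R] (n : ℕ) :
    (∀ g₀ : Matrix (Fin 2) (Fin 2) (MatR R n), IsUnit g₀ → SLstarA (Phi g₀)) ∧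
    (∀ g₀ g₁ : Matrix (Fin 2) (Fin 2) (MatR R n), IsUnit g₀ → IsUnit g₁ →
      Phi (g₀ * g₁) = Phi g₀ * Phi g₁) ∧
    (∀ g₀ g₁ : Matrix (Fin 2) (Fin 2) (MatR R n), IsUnit g₀ → IsUnit g₁ →
      Phi g₀ = Phi g₁ → g₀ = g₁) ∧
    (∀ g : Matrix (Fin 2) (Fin 2) (MatR R n × MatR R n), SLstarA g →
      ∃ g₀ : Matrix (Fin 2) (Fin 2) (MatR R n), IsUnit g₀ ∧ Phi g₀ = g) := by
  refine ⟨?_, ?_, ?_, ?_⟩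
  · -- Phi lands in SL_*
    intro g₀ hu
    have hmul : g₀ * Ring.inverse g₀ = 1 := Ring.mul_inverse_cancel _ hu
    have hmul' : Ring.inverse g₀ * g₀ = 1 := Ring.inverse_mul_cancel _ hu
    constructor
    · apply pair_ext
      · rw [_root_.map_mul, _root_.map_mul, fstM_invA2, sndM_Phi, fstM_JA, fstM_Phi, sigT_Psi,
          Matrix.mul_assoc (Jm R n * Ring.inverse g₀), Jm'_mul_Jm, Matrix.mul_one,
          Matrix.mul_assoc, hmul', Matrix.mul_one]
      · rw [_root_.map_mul, _root_.map_mul, sndM_invA2, fstM_Phi, sndM_JA, sndM_Phi, Psi]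
        simp only [Matrix.mul_assoc]
        rw [← Matrix.mul_assoc (Jm R n) (Jm R n), Jm_mul_Jm, Matrix.neg_mul,
          Matrix.one_mul, Matrix.mul_neg, ← Matrix.mul_assoc, ← sigT_mul, hmul',
          sigT_one, Matrix.one_mul, neg_Jm']
    · have e00 := congrFun (congrFun hmul 0) 0
      have e11 := congrFun (congrFun hmul 1) 1
      simp only [Matrix.mul_apply, Fin.sum_univ_two, Matrix.one_apply_eq] at e00 e11
      rw [detStarA_eq, fstM_Phi, sndM_Phi, Psi_entries, Prod.ext_iff]
      constructor
      · simp only [Matrix.cons_val', Matrix.cons_val_zero, Matrix.cons_val_one,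
          Matrix.head_cons, Matrix.head_fin_const, Matrix.empty_val',
          Matrix.cons_val_fin_one, Matrix.of_apply, Matrix.transpose_neg,
          Matrix.transpose_transpose, Matrix.mul_neg, sub_neg_eq_add, Prod.fst_one]
        exact e00
      · have e11' := congrArg Matrix.transpose e11
        simp only [Matrix.transpose_add, Matrix.transpose_mul, Matrix.transpose_one] at e11'
        simp only [Matrix.cons_val', Matrix.cons_val_zero, Matrix.cons_val_one,
          Matrix.head_cons, Matrix.head_fin_const, Matrix.empty_val',
          Matrix.cons_val_fin_one, Matrix.of_apply, Matrix.transpose_neg,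
          Matrix.transpose_transpose, Matrix.neg_mul, sub_neg_eq_add, Prod.snd_one]
        rw [add_comm]
        exact e11'
  · -- multiplicative
    intro g₀ g₁ h₀ h₁
    apply pair_ext
    · rw [_root_.map_mul, fstM_Phi, fstM_Phi, fstM_Phi]
    · rw [_root_.map_mul, sndM_Phi, sndM_Phi, sndM_Phi, inverse_mul_rev h₀ h₁, Psi_mul]
  · -- injective
    intro g₀ g₁ _ _ h
    have := congrArg fstM h
    simpa [fstM_Phi] using this
  · -- surjective onto SL_*
    intro g hg
    obtain ⟨h1, _⟩ := hg
    have hfst : sigT (sndM g) * Jm R n * fstM g = Jm R n := by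
      have := congrArg fstM h1
      simpa only [_root_.map_mul, fstM_invA2, fstM_JA] using this
    set a := fstM g with ha
    set b := sndM g with hb
    have hL : (Jm' R n * sigT b * Jm R n) * a = 1 := by
      rw [Matrix.mul_assoc, Matrix.mul_assoc, ← Matrix.mul_assoc (sigT b), hfst,
        Jm'_mul_Jm]
    have hR : a * (Jm' R n * sigT b * Jm R n) = 1 := nested_mul_eq_one_comm hL
    have hu : IsUnit a := ⟨⟨a, Jm' R n * sigT b * Jm R n, hR, hL⟩, rfl⟩
    have hinv : Ring.inverse a = Jm' R n * sigT b * Jm R n := by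
      calc Ring.inverse a = Ring.inverse a * (a * (Jm' R n * sigT b * Jm R n)) := by
            rw [hR, Matrix.mul_one]
        _ = Jm' R n * sigT b * Jm R n := by
            rw [← Matrix.mul_assoc, Ring.inverse_mul_cancel a hu, Matrix.one_mul]
    refine ⟨a, hu, ?_⟩
    apply pair_ext
    · rw [fstM_Phi]
    · rw [sndM_Phi, hinv]
      have key : Jm' R n * sigT b * Jm R n = Psi b := by
        rw [Psi, ← neg_Jm', ← neg_Jm]
        simp only [Matrix.neg_mul, Matrix.mul_neg, neg_neg]
      rw [key, Psi_Psi]
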